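/- Let Γ ∈ ℝ^{d×d} be symmetric with zero diagonal. For k ∈ {1,…,d}, define Σ^{(k)} ∈ ℝ^{(d-1)×(d-1)} by Σ^{(k)}_{ij} = (Γ_{ik} + Γ_{jk} - Γ_{ij})/2 for i,j ≠ k. Then Γ is strictly conditionally negative definite (aᵀΓa < 0 for all nonzero a with Σᵢ aᵢ = 0) if and only if Σ^{(k)} is strictly positive definite. -/

import Mathlib

open Matrix

private lemma sum_split' {d : ℕ} (k : Fin d) (f : Fin d → ℝ) :
    ∑ i, f i = f k + ∑ i : {x : Fin d // x ≠ k}, f i.1 := by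
  rw [← Finset.add_sum_erase _ f (Finset.mem_univ k)]
  congr 1
  rw [← Finset.sum_subtype (p := fun x => x ≠ k) (Finset.univ.erase k)
      (fun x => by simp [Finset.mem_erase])]

/-- A symmetric matrix `Γ` with zero diagonal is strictly
conditionally negative definite iff `Σ^{(k)}` with entries
`(Γ_{ik}+Γ_{jk}-Γ_{ij})/2`, `i,j ≠ k`, is strictly positive definite. -/
theorem scnd_iff_sigma_posdef (d : ℕ) (Γ : Matrix (Fin d) (Fin d) ℝ)
    (hsym : Γ.IsSymm) (hdiag : ∀ i, Γ i i = 0) (k : Fin d) :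
    (∀ a : Fin d → ℝ, a ≠ 0 → ∑ i, a i = 0 → a ⬝ᵥ Γ.mulVec a < 0) ↔
      (Matrix.of fun i j : {x : Fin d // x ≠ k} =>
        (Γ i.1 k + Γ j.1 k - Γ i.1 j.1) / 2).PosDef := by
  set T := {x : Fin d // x ≠ k}
  set M : Matrix T T ℝ := Matrix.of fun i j : T =>
    (Γ i.1 k + Γ j.1 k - Γ i.1 j.1) / 2 with hM
  -- extension map
  set e : (T → ℝ) → (Fin d → ℝ) := fun b i =>
    if h : i = k then -∑ j : T, b j else b ⟨i, h⟩ with he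
  have hek : ∀ b, e b k = -∑ j : T, b j := fun b => dif_pos rfl
  have het : ∀ (b : T → ℝ) (i : T), e b i.1 = b i := by
    intro b i
    simp only [he, dif_neg i.2]
    rfl
  have hsum : ∀ b, ∑ i, e b i = 0 := by
    intro b
    rw [sum_split' k, hek]
    simp only [het]
    ring
  -- key algebraic identity
  have key : ∀ b : T → ℝ, (e b) ⬝ᵥ Γ.mulVec (e b) = -2 * (b ⬝ᵥ M.mulVec b) := by
    intro b
    set S := ∑ j : T, b j with hS
    set Tt := ∑ i : T, b i * Γ i.1 k with hTt
    set Q := ∑ i : T, ∑ j : T, b i * (Γ i.1 j.1 * b j) with hQ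
    have inner : ∀ i : Fin d,
        (Γ.mulVec (e b)) i = Γ i k * (-S) + ∑ j : T, Γ i j.1 * b j := by
      intro i
      simp only [mulVec, dotProduct]
      rw [sum_split' k (fun j => Γ i j * e b j), hek]
      simp only [het]
      rfl
    have hΓside : (e b) ⬝ᵥ Γ.mulVec (e b) = Q - 2 * S * Tt := by
      simp only [dotProduct]
      rw [sum_split' k (fun i => e b i * (Γ.mulVec (e b)) i), hek]
      simp only [het, inner, hdiag k]
      have h1 : ∑ j : T, Γ k j.1 * b j = Tt := by
        rw [hTt]
        exact Finset.sum_congr rfl fun j _ => by rw [hsym.apply j.1 k, mul_comm]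
      rw [h1]
      have h2 : ∑ i : T, b i * (Γ i.1 k * (-S) + ∑ j : T, Γ i.1 j.1 * b j)
          = Tt * (-S) + Q := by
        simp only [mul_add]
        rw [Finset.sum_add_distrib, hTt, hQ]
        congr 1
        · rw [Finset.sum_mul]
          exact Finset.sum_congr rfl fun i _ => by ring
        · exact Finset.sum_congr rfl fun i _ => by rw [Finset.mul_sum]
      rw [h2]; ring
    have hMside : b ⬝ᵥ M.mulVec b = S * Tt - Q / 2 := by
      simp only [dotProduct, mulVec, hM, Matrix.of_apply]
      have : ∀ i : T, b i * ∑ j : T, (Γ i.1 k + Γ j.1 k - Γ i.1 j.1) / 2 * b j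
          = ∑ j : T, ((b i * Γ i.1 k) * b j / 2 + b i * (b j * Γ j.1 k) / 2
              - b i * (Γ i.1 j.1 * b j) / 2) := by
        intro i
        rw [Finset.mul_sum]
        exact Finset.sum_congr rfl fun j _ => by ring
      simp only [this, Finset.sum_add_distrib, Finset.sum_sub_distrib]
      have hA : ∑ i : T, ∑ j : T, (b i * Γ i.1 k) * b j / 2 = Tt * S / 2 := by
        rw [hTt, hS, Finset.sum_mul_sum]
        rw [Finset.sum_div]
        exact Finset.sum_congr rfl fun i _ => by
          rw [Finset.sum_div]
      have hB : ∑ i : T, ∑ j : T, b i * (b j * Γ j.1 k) / 2 = S * Tt / 2 := by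
        rw [hTt, hS, Finset.sum_mul_sum, Finset.sum_div]
        exact Finset.sum_congr rfl fun i _ => by rw [Finset.sum_div]
      have hC : ∑ i : T, ∑ j : T, b i * (Γ i.1 j.1 * b j) / 2 = Q / 2 := by
        rw [hQ, Finset.sum_div]
        exact Finset.sum_congr rfl fun i _ => by rw [Finset.sum_div]
      rw [hA, hB, hC]; ring
    rw [hΓside, hMside]; ring
  constructor
  · intro h
    refine posDef_iff_dotProduct_mulVec.mpr ⟨?_, ?_⟩
    · ext i j
      simp only [conjTranspose_apply, hM, Matrix.of_apply, star_trivial]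
      rw [hsym.apply i.1 j.1]
      ring
    · intro b hb
      have hbe : e b ≠ 0 := by
        obtain ⟨i, hi⟩ := Function.ne_iff.mp hb
        intro hcontra
        exact hi (by simpa [het] using congrFun hcontra i.1)
      have := h (e b) hbe (hsum b)
      rw [key b] at this
      simp only [star_trivial]
      linarith
  · intro h a ha hsa
    set b : T → ℝ := fun i => a i.1 with hb
    have hab : e b = a := by
      funext i
      by_cases hi : i = k
      · rw [hi, hek]
        have h0 := sum_split' k a
        rw [hsa] at h0
        simp only [hb]
        linarith
      · exact het b ⟨i, hi⟩
    have hbne : b ≠ 0 := by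
      intro hb0
      apply ha
      rw [← hab, hb0]
      funext i
      by_cases hi : i = k
      · rw [hi, hek]; simp
      · exact het 0 ⟨i, hi⟩
    have hpos := h.dotProduct_mulVec_pos hbne
    simp only [star_trivial] at hpos
    rw [← hab, key b]
    linarith
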